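/- Let G ∈ WR(A, B) be a wreath-like product of groups A and B. Then there exists a map ρ : B → A^B with ρ_e = e such that v_{b,c} := ρ_b σ_b(ρ_c) ρ_{bc}⁻¹ ∈ A^{(B)} for all b, c ∈ B, and such that, setting α_b := Ad(ρ_b) ∘ σ_b ∈ Aut(A^{(B)}), the group G is isomorphic to the cocycle semidirect product A^{(B)} ⋊_{α,v} B. -/

import Mathlib

/-- The shift automorphism `σ_b` of the full direct product `A^B`, `(σ_b x)_c = x_{b⁻¹ c}`. -/
def shiftAut {A : Type*} (B : Type*) [Group A] [Group B] (b : B) : MulAut (B → A) where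
  toFun x := fun c => x (b⁻¹ * c)
  invFun x := fun c => x (b * c)
  left_inv x := by funext c; simp
  right_inv x := by funext c; simp
  map_mul' x y := rfl

/-- The restricted direct product `A^{(B)} = ⊕_{b ∈ B} A` of finitely supported functions,
as a subgroup of the full direct product `A^B`. -/
def Restricted (A B : Type*) [Group A] : Subgroup (B → A) where
  carrier := {f | (Function.mulSupport f).Finite}
  one_mem' := by simp [Function.mulSupport]
  mul_mem' := fun hf hg => Set.Finite.subset (hf.union hg) (Function.mulSupport_mul _ _)
  inv_mem' := fun hf => by simpa [Function.mulSupport_inv] using hf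

/-- The automorphism-level map `α_b = Ad(ρ_b) ∘ σ_b` of `A^B`, as a function. -/
def adShift {A B : Type*} [Group A] [Group B] (ρ : B → (B → A)) (b : B) (x : B → A) :
    B → A :=
  ρ b * shiftAut B b x * (ρ b)⁻¹

/-- The 2-cocycle `v_{b,c} = ρ_b σ_b(ρ_c) ρ_{bc}⁻¹`. -/
def vShift {A B : Type*} [Group A] [Group B] (ρ : B → (B → A)) (b c : B) : B → A :=
  ρ b * shiftAut B b (ρ c) * (ρ (b * c))⁻¹

/-- The restricted product group `A^{(B)}`. -/
abbrev RP (A B : Type*) [Group A] := ↥(Restricted A B)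

/-- The coordinate subgroup `A_c ≤ A^{(B)}` of functions supported at `{c}`. -/
def coordSub (A : Type*) {B : Type*} [Group A] (c : B) : Subgroup (RP A B) where
  carrier := {f | ∀ d, d ≠ c → (f : B → A) d = 1}
  one_mem' := fun _ _ => rfl
  mul_mem' := by
    intro f g hf hg d hd
    have : ((f * g : RP A B) : B → A) d = (f : B → A) d * (g : B → A) d := rfl
    rw [this, hf d hd, hg d hd, one_mul]
  inv_mem' := by
    intro f hf d hd
    have : ((f⁻¹ : RP A B) : B → A) d = ((f : B → A) d)⁻¹ := rfl
    rw [this, hf d hd, inv_one]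

/-- `G` is a wreath-like product of `A` and `B` (`G ∈ WR(A,B)`): there is a short exact
sequence `{e} → ⊕_{b ∈ B} A_b → G →^ε B → {e}`, where the kernel of `ε` is a copy (under
`Φ`) of the restricted product `A^{(B)}`, with coordinate subgroups `A_b = Φ(A_b)`, and
conjugation satisfies `g A_b g⁻¹ = A_{ε(g) b}`. -/
structure IsWreathLike (A B : Type*) [Group A] [Group B] (G : Type*) [Group G] where
  /-- the quotient homomorphism onto `B` -/
  eps : G →* B
  surj : Function.Surjective eps
  /-- the identification of `ker ε` with `A^{(B)} = ⊕_{b ∈ B} A_b` -/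
  Phi : RP A B →* G
  inj : Function.Injective Phi
  range_eq_ker : Phi.range = eps.ker
  conj_coord : ∀ (g : G) (b : B),
    ((coordSub A b).map Phi).map (MulAut.conj g).toMonoidHom
      = (coordSub A (eps g * b)).map Phi

/-- The multiplication of the cocycle semidirect product `A^{(B)} ⋊_{α,v} B` for
`α_b = Ad(ρ_b) ∘ σ_b` and `v_{b,c} = ρ_b σ_b(ρ_c) ρ_{bc}⁻¹`, on the ambient set `A^B × B`. -/
def cocycleMulShift {A B : Type*} [Group A] [Group B] (ρ : B → (B → A))
    (x y : (B → A) × B) : (B → A) × B :=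
  (x.1 * adShift ρ x.2 y.1 * vShift ρ x.2 y.2, x.2 * y.2)

theorem wr_single_same {A B : Type*} [One A] [DecidableEq B] (c : B) (a : A) :
    @Pi.mulSingle B (fun _ => A) _ _ c a c = a := by simp

theorem wr_single_ne {A B : Type*} [One A] [DecidableEq B] {d c : B} (h : d ≠ c) (a : A) :
    @Pi.mulSingle B (fun _ => A) _ _ c a d = 1 := by simp [h]

theorem wr_single_mul {A B : Type*} [MulOneClass A] [DecidableEq B] (c : B) (a a' : A) :
    @Pi.mulSingle B (fun _ => A) _ _ c (a * a')
      = @Pi.mulSingle B (fun _ => A) _ _ c a * @Pi.mulSingle B (fun _ => A) _ _ c a' :=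
  Pi.mulSingle_mul (f := fun _ => A) c a a'

theorem wr_single_one {A B : Type*} [One A] [DecidableEq B] (c : B) :
    @Pi.mulSingle B (fun _ => A) _ _ c (1 : A) = 1 := Pi.mulSingle_one (M := fun _ => A) c

/-- Every wreath-like product `G ∈ WR(A,B)` admits a decomposition as a cocycle semidirect
product: there is `ρ : B → A^B` with `ρ_e = e` and `v_{b,c} := ρ_b σ_b(ρ_c) ρ_{bc}⁻¹ ∈ A^{(B)}`
such that, with `α_b := Ad(ρ_b) ∘ σ_b`, we have `G ≅ A^{(B)} ⋊_{α,v} B`. -/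
theorem wreath_like_is_cocycle_semidirect_product {A B G : Type*} [Group A] [Group B]
    [Group G] (W : IsWreathLike A B G) :
    ∃ ρ : B → (B → A), ρ 1 = 1 ∧
      (∀ b c, vShift ρ b c ∈ Restricted A B) ∧
      ∃ θ : (B → A) × B → G,
        (∀ x y : (B → A) × B, x.1 ∈ Restricted A B → y.1 ∈ Restricted A B →
          θ (cocycleMulShift ρ x y) = θ x * θ y) ∧
        Set.InjOn θ {p : (B → A) × B | p.1 ∈ Restricted A B} ∧
        (∀ g : G, ∃ p : (B → A) × B, p.1 ∈ Restricted A B ∧ θ p = g) := by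
  classical
  have hmem : ∀ x : B → A, x ∈ Restricted A B ↔ (Function.mulSupport x).Finite :=
    fun _ => Iff.rfl
  have hcoe_mk : ∀ (v : B → A) (hv : v ∈ Restricted A B),
      (((⟨v, hv⟩ : RP A B)) : B → A) = v := fun _ _ => rfl
  have hadapp : ∀ (σ : B → (B → A)) (b : B) (x : B → A) (d : B),
      adShift σ b x d = σ b d * x (b⁻¹ * d) * (σ b d)⁻¹ := fun _ _ _ _ => rfl
  have hvapp : ∀ (σ : B → (B → A)) (b c d : B),
      vShift σ b c d = σ b d * σ c (b⁻¹ * d) * (σ (b * c) d)⁻¹ := fun _ _ _ _ => rfl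
  -- a set-theoretic section of eps with s 1 = 1
  obtain ⟨s, hs1, hse⟩ : ∃ s : B → G, s 1 = 1 ∧ ∀ b, W.eps (s b) = b := by
    refine ⟨fun b => if b = 1 then 1 else Function.surjInv W.surj b, by simp, fun b => ?_⟩
    by_cases h : b = 1
    · simp [h]
    · simp [h, Function.surjInv_eq W.surj]
  -- the coordinate elements δ c a
  have hsingmem : ∀ (c : B) (a : A), Pi.mulSingle c a ∈ Restricted A B := fun c a =>
    (Set.finite_singleton c).subset Pi.mulSupport_mulSingle_subset
  obtain ⟨δ, hδcoe⟩ : ∃ δ : B → A → RP A B, ∀ c a,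
      ((δ c a : RP A B) : B → A) = Pi.mulSingle c a :=
    ⟨fun c a => ⟨Pi.mulSingle c a, hsingmem c a⟩, fun _ _ => rfl⟩
  have hδcoord : ∀ (c : B) (a : A), δ c a ∈ coordSub A c := by
    intro c a d hd
    rw [hδcoe]
    exact wr_single_ne hd a
  have hδeq : ∀ (c : B) (x : RP A B), x ∈ coordSub A c → x = δ c ((x : B → A) c) := by
    intro c x hx
    have hx' : ∀ d, d ≠ c → (x : B → A) d = 1 := hx
    apply Subtype.ext
    rw [hδcoe]
    funext d
    by_cases hd : d = c
    · subst hd; exact (wr_single_same d _).symm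
    · rw [hx' d hd]; exact (wr_single_ne hd _).symm
  have hδmul : ∀ (c : B) (a a' : A), δ c (a * a') = δ c a * δ c a' := by
    intro c a a'
    apply Subtype.ext
    rw [Subgroup.coe_mul, hδcoe, hδcoe, hδcoe]
    exact wr_single_mul c a a'
  have hδinj : ∀ c : B, Function.Injective (δ c) := by
    intro c a a' h
    have h2 := congrArg (fun z : RP A B => (z : B → A) c) h
    simp only [hδcoe, Pi.mulSingle_eq_same] at h2
    exact h2
  have hδ1 : ∀ c : B, δ c (1 : A) = 1 := by
    intro c
    apply Subtype.ext
    rw [hδcoe, OneMemClass.coe_one]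
    exact wr_single_one c
  -- conjugation moves coordinates
  have hconj : ∀ (g : G) (b : B) (x : RP A B), x ∈ coordSub A b →
      ∃ y : RP A B, y ∈ coordSub A (W.eps g * b) ∧ g * W.Phi x * g⁻¹ = W.Phi y := by
    intro g b x hx
    have h1 : g * W.Phi x * g⁻¹ ∈
        ((coordSub A b).map W.Phi).map (MulAut.conj g).toMonoidHom :=
      Subgroup.mem_map.mpr ⟨W.Phi x, Subgroup.mem_map.mpr ⟨x, hx, rfl⟩, rfl⟩
    rw [W.conj_coord] at h1
    obtain ⟨y, hy, hyeq⟩ := Subgroup.mem_map.mp h1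
    exact ⟨y, hy, hyeq.symm⟩
  -- the rectified coordinate identifications f c
  have hfe : ∀ (c : B) (a : A), ∃ y : RP A B, y ∈ coordSub A c ∧
      s c * W.Phi (δ 1 a) * (s c)⁻¹ = W.Phi y := by
    intro c a
    obtain ⟨y, hy, he⟩ := hconj (s c) 1 (δ 1 a) (hδcoord 1 a)
    rw [hse, mul_one] at hy
    exact ⟨y, hy, he⟩
  choose F hF1 hF2 using hfe
  obtain ⟨f, hfF⟩ : ∃ f : B → A → A, ∀ c a, f c a = ((F c a : RP A B) : B → A) c :=
    ⟨_, fun _ _ => rfl⟩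
  have hf : ∀ (c : B) (a : A), s c * W.Phi (δ 1 a) * (s c)⁻¹ = W.Phi (δ c (f c a)) := by
    intro c a
    rw [hF2 c a]
    congr 1
    rw [hfF]
    exact hδeq c (F c a) (hF1 c a)
  have hf_one : ∀ c, f c 1 = 1 := by
    intro c
    have h : W.Phi (δ c (f c 1)) = W.Phi 1 := by
      rw [← hf c 1, hδ1]; simp
    have h3 := congrArg (fun z : RP A B => (z : B → A) c) (W.inj h)
    simp only [hδcoe, Pi.mulSingle_eq_same, OneMemClass.coe_one, Pi.one_apply] at h3
    exact h3
  have hf_mul : ∀ c a a', f c (a * a') = f c a * f c a' := by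
    intro c a a'
    have h : W.Phi (δ c (f c (a * a'))) = W.Phi (δ c (f c a * f c a')) := by
      rw [← hf c (a * a'), hδmul 1 a a', map_mul, hδmul c (f c a) (f c a'), map_mul,
        ← hf c a, ← hf c a']
      group
    exact hδinj c (W.inj h)
  have hf_inj : ∀ c, Function.Injective (f c) := by
    intro c a a' h
    have h0 := hf c a
    rw [h, ← hf c a'] at h0
    exact hδinj 1 (W.inj (mul_left_cancel (mul_right_cancel h0)))
  have hf_surj : ∀ c, Function.Surjective (f c) := by
    intro c a'
    obtain ⟨y, hy, he⟩ := hconj (s c)⁻¹ c (δ c a') (hδcoord c a')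
    rw [map_inv, hse, inv_mul_cancel] at hy
    refine ⟨(y : B → A) 1, ?_⟩
    have h2 : W.Phi (δ c a') = s c * W.Phi y * (s c)⁻¹ := by
      rw [← he]; group
    rw [hδeq 1 y hy, hf c] at h2
    exact hδinj c (W.inj h2.symm)
  -- the rectified embedding Ψ
  have hΨsup : ∀ x : RP A B, (fun d => f d ((x : B → A) d)) ∈ Restricted A B := by
    intro x
    refine (hmem _).mpr (Set.Finite.subset ((hmem _).mp x.2) ?_)
    intro d hd
    simp only [Function.mem_mulSupport] at hd ⊢
    intro hxd
    exact hd (by rw [hxd]; exact hf_one d)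
  obtain ⟨F', hF'coe⟩ : ∃ F' : RP A B → RP A B, ∀ x : RP A B,
      ((F' x : RP A B) : B → A) = fun d => f d ((x : B → A) d) :=
    ⟨fun x => ⟨_, hΨsup x⟩, fun _ => rfl⟩
  obtain ⟨Ψ, hΨapp⟩ : ∃ Ψ : RP A B → G, ∀ x, Ψ x = W.Phi (F' x) := ⟨_, fun _ => rfl⟩
  have hΨmul : ∀ x y : RP A B, Ψ (x * y) = Ψ x * Ψ y := by
    intro x y
    rw [hΨapp, hΨapp, hΨapp, ← map_mul]
    congr 1
    apply Subtype.ext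
    rw [hF'coe, Subgroup.coe_mul (Restricted A B) (F' x) (F' y), hF'coe, hF'coe]
    funext d
    simp only [Subgroup.coe_mul, Pi.mul_apply]
    exact hf_mul d _ _
  have hΨone : Ψ (1 : RP A B) = 1 := by
    rw [hΨapp, ← map_one W.Phi]
    congr 1
    apply Subtype.ext
    rw [hF'coe, OneMemClass.coe_one]
    funext d
    simp only [OneMemClass.coe_one, Pi.one_apply]
    exact hf_one d
  have hΨinv : ∀ x : RP A B, Ψ x⁻¹ = (Ψ x)⁻¹ := by
    intro x
    have h := hΨmul x⁻¹ x
    rw [inv_mul_cancel, hΨone] at h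
    exact eq_inv_of_mul_eq_one_left h.symm
  have hΨinj : Function.Injective Ψ := by
    intro x y h
    rw [hΨapp, hΨapp] at h
    have h2 := congrArg (fun z : RP A B => (z : B → A)) (W.inj h)
    simp only [hF'coe] at h2
    apply Subtype.ext
    funext d
    exact hf_inj d (congrFun h2 d)
  have hΨδ : ∀ (c : B) (a : A), Ψ (δ c a) = s c * W.Phi (δ 1 a) * (s c)⁻¹ := by
    intro c a
    rw [hf c a, hΨapp]
    congr 1
    apply Subtype.ext
    rw [hF'coe, hδcoe c a, hδcoe c (f c a)]
    funext d
    by_cases hd : d = c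
    · subst hd
      simp only [wr_single_same]
    · simp only [wr_single_ne hd, hf_one]
  have hΨker : ∀ x : RP A B, W.eps (Ψ x) = 1 := by
    intro x
    have h : Ψ x ∈ W.eps.ker := by
      rw [← W.range_eq_ker, hΨapp]
      exact MonoidHom.mem_range.mpr ⟨_, rfl⟩
    exact MonoidHom.mem_ker.mp h
  choose finv hfinv using hf_surj
  have hfinv_one : ∀ c, finv c 1 = 1 := fun c => hf_inj c (by rw [hfinv, hf_one])
  have hΨrange : ∀ g : G, W.eps g = 1 → ∃ x : RP A B, Ψ x = g := by
    intro g hg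
    have hgk : g ∈ W.Phi.range := by
      rw [W.range_eq_ker]; exact MonoidHom.mem_ker.mpr hg
    obtain ⟨z, rfl⟩ := MonoidHom.mem_range.mp hgk
    have hzsup : (fun d => finv d ((z : B → A) d)) ∈ Restricted A B := by
      refine (hmem _).mpr (Set.Finite.subset ((hmem _).mp z.2) ?_)
      intro d hd
      simp only [Function.mem_mulSupport] at hd ⊢
      intro hzd
      exact hd (by rw [hzd]; exact hfinv_one d)
    obtain ⟨z', hz'⟩ : ∃ z' : RP A B,
        ((z' : RP A B) : B → A) = fun d => finv d ((z : B → A) d) := ⟨⟨_, hzsup⟩, rfl⟩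
    refine ⟨z', ?_⟩
    rw [hΨapp]
    congr 1
    apply Subtype.ext
    rw [hF'coe, hz']
    funext d
    exact hfinv d _
  -- the elements u b c and the map ρ
  have hue : ∀ b c : B, ∃ x : RP A B, Ψ x = s b * s c * (s (b * c))⁻¹ := by
    intro b c
    apply hΨrange
    rw [map_mul, map_mul, map_inv, hse, hse, hse]
    group
  choose u hu using hue
  obtain ⟨ρ, hρapp⟩ : ∃ ρ : B → B → A, ∀ b d,
      ρ b d = ((u b (b⁻¹ * d) : RP A B) : B → A) d := ⟨_, fun _ _ => rfl⟩
  have hΓmem : ∀ (b : B) (x : RP A B), adShift ρ b (x : B → A) ∈ Restricted A B := by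
    intro b x
    refine (hmem _).mpr
      (Set.Finite.subset (((hmem _).mp x.2).image (fun d => b * d)) ?_)
    intro d hd
    simp only [Function.mem_mulSupport] at hd
    rw [hadapp] at hd
    by_cases hx : (x : B → A) (b⁻¹ * d) = 1
    · exact absurd (by rw [hx]; group) hd
    · exact ⟨b⁻¹ * d, Function.mem_mulSupport.mpr hx, by group⟩
  obtain ⟨Γ, hΓcoe⟩ : ∃ Γ : B → RP A B → RP A B, ∀ b x,
      ((Γ b x : RP A B) : B → A) = adShift ρ b (x : B → A) :=
    ⟨fun b x => ⟨adShift ρ b (x : B → A), hΓmem b x⟩, fun _ _ => rfl⟩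
  have hΓmul : ∀ (b : B) (x y : RP A B), Γ b (x * y) = Γ b x * Γ b y := by
    intro b x y
    apply Subtype.ext
    rw [Subgroup.coe_mul, hΓcoe, hΓcoe, hΓcoe, Subgroup.coe_mul]
    funext d
    simp only [hadapp, Pi.mul_apply]
    group
  have hΓδ : ∀ (b c : B) (a : A), Γ b (δ c a) = u b c * δ (b * c) a * (u b c)⁻¹ := by
    intro b c a
    apply Subtype.ext
    rw [hΓcoe, hδcoe, Subgroup.coe_mul, Subgroup.coe_mul, Subgroup.coe_inv, hδcoe]
    funext d
    simp only [hadapp, Pi.mul_apply, Pi.inv_apply]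
    by_cases hd : d = b * c
    · subst hd
      have h1 : b⁻¹ * (b * c) = c := by group
      rw [h1, Pi.mulSingle_eq_same, Pi.mulSingle_eq_same]
      have h2 : ρ b (b * c) = ((u b c : RP A B) : B → A) (b * c) := by
        rw [hρapp, h1]
      rw [h2]
    · have h1 : b⁻¹ * d ≠ c := fun h => hd (by rw [← h]; group)
      rw [Pi.mulSingle_eq_of_ne h1, Pi.mulSingle_eq_of_ne hd]
      group
  have hkeyδ : ∀ (b c : B) (a : A), s b * Ψ (δ c a) * (s b)⁻¹ = Ψ (Γ b (δ c a)) := by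
    intro b c a
    rw [hΓδ, hΨmul, hΨmul, hΨinv, hu, hΨδ, hΨδ]
    group
  -- the key conjugation formula
  have hkey_aux : ∀ (S : Finset B) (b : B) (x : RP A B),
      Function.mulSupport (x : B → A) ⊆ ↑S → s b * Ψ x * (s b)⁻¹ = Ψ (Γ b x) := by
    intro S
    induction S using Finset.induction_on with
    | empty =>
      intro b x hx
      have hx1 : x = 1 := by
        apply Subtype.ext
        rw [OneMemClass.coe_one]
        funext d
        rw [Pi.one_apply]
        by_contra hd
        simpa using hx (Function.mem_mulSupport.mpr hd)
      have hΓ1 : Γ b (1 : RP A B) = 1 := by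
        apply Subtype.ext
        rw [hΓcoe, OneMemClass.coe_one]
        funext d
        rw [hadapp, Pi.one_apply, Pi.one_apply]
        group
      rw [hx1, hΓ1, hΨone]
      group
    | @insert c S' hc ih =>
      intro b x hx
      obtain ⟨x', hx'⟩ : ∃ x' : RP A B, x' = (δ c ((x : B → A) c))⁻¹ * x := ⟨_, rfl⟩
      have hxdec : x = δ c ((x : B → A) c) * x' := by rw [hx']; group
      have hx'sup : Function.mulSupport (x' : B → A) ⊆ ↑S' := by
        intro d hd
        rw [Function.mem_mulSupport] at hd
        have hdval : (x' : B → A) d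
            = (@Pi.mulSingle B (fun _ => A) _ _ c ((x : B → A) c) d)⁻¹
              * (x : B → A) d := by
          rw [hx', Subgroup.coe_mul, Subgroup.coe_inv, hδcoe, Pi.mul_apply, Pi.inv_apply]
        by_cases hdc : d = c
        · subst hdc
          rw [hdval, wr_single_same] at hd
          exact absurd (by group) hd
        · have h2 : (x' : B → A) d = (x : B → A) d := by
            rw [hdval, wr_single_ne hdc, inv_one, one_mul]
          rw [h2] at hd
          have h3 := hx (Function.mem_mulSupport.mpr hd)
          simp only [Finset.coe_insert, Set.mem_insert_iff] at h3
          rcases h3 with h3 | h3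
          · exact absurd h3 hdc
          · exact h3
      calc s b * Ψ x * (s b)⁻¹
          = (s b * Ψ (δ c ((x : B → A) c)) * (s b)⁻¹) * (s b * Ψ x' * (s b)⁻¹) := by
            conv_lhs => rw [hxdec, hΨmul]
            group
        _ = Ψ (Γ b (δ c ((x : B → A) c))) * Ψ (Γ b x') := by
            rw [hkeyδ, ih b x' hx'sup]
        _ = Ψ (Γ b (δ c ((x : B → A) c)) * Γ b x') := (hΨmul _ _).symm
        _ = Ψ (Γ b x) := by
            rw [← hΓmul]
            conv_rhs => rw [hxdec]
  have hkey : ∀ (b : B) (x : RP A B), s b * Ψ x * (s b)⁻¹ = Ψ (Γ b x) := by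
    intro b x
    exact hkey_aux ((hmem _).mp x.2).toFinset b x (by simp)
  -- the cocycle identity
  have hcoc : ∀ b c e : B, u b c * u (b * c) e = Γ b (u c e) * u b (c * e) := by
    intro b c e
    apply hΨinj
    rw [hΨmul, hΨmul, ← hkey]
    simp only [hu]
    rw [mul_assoc b c e]
    group
  have hvu : ∀ b c : B, vShift ρ b c = ((u b c : RP A B) : B → A) := by
    intro b c
    funext d
    have h := congrArg (fun z : RP A B => (z : B → A) d) (hcoc b c ((b * c)⁻¹ * d))
    simp only [Subgroup.coe_mul, Pi.mul_apply, hΓcoe, hadapp] at h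
    have h1 : ((u (b * c) ((b * c)⁻¹ * d) : RP A B) : B → A) d = ρ (b * c) d := by
      rw [hρapp]
    have h2 : ((u c ((b * c)⁻¹ * d) : RP A B) : B → A) (b⁻¹ * d) = ρ c (b⁻¹ * d) := by
      rw [hρapp, show c⁻¹ * (b⁻¹ * d) = (b * c)⁻¹ * d from by group]
    have h3 : ((u b (c * ((b * c)⁻¹ * d)) : RP A B) : B → A) d = ρ b d := by
      rw [hρapp, show c * ((b * c)⁻¹ * d) = b⁻¹ * d from by group]
    rw [h1, h2, h3, inv_mul_cancel_right] at h
    rw [hvapp, ← h, mul_inv_cancel_right]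
  have hρ1 : ρ 1 = 1 := by
    have hu1 : ∀ c, u 1 c = 1 := by
      intro c
      apply hΨinj
      rw [hΨone, hu]
      simp [hs1]
    funext d
    rw [Pi.one_apply, hρapp, hu1, OneMemClass.coe_one, Pi.one_apply]
  refine ⟨ρ, hρ1, fun b c => by rw [hvu]; exact (u b c).2, ?_⟩
  obtain ⟨Ψ', hΨ'mem⟩ : ∃ Ψ' : (B → A) → G, ∀ (x : B → A) (h : x ∈ Restricted A B),
      Ψ' x = Ψ ⟨x, h⟩ :=
    ⟨fun x => if h : x ∈ Restricted A B then Ψ ⟨x, h⟩ else 1, fun x h => dif_pos h⟩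
  have hΨ'coe : ∀ z : RP A B, Ψ' (z : B → A) = Ψ z := fun z => hΨ'mem _ z.2
  refine ⟨fun p => Ψ' p.1 * s p.2, ?_, ?_, ?_⟩
  · intro x y hx hy
    rcases x with ⟨x1, b⟩
    rcases y with ⟨y1, c⟩
    simp only at hx hy
    simp only [cocycleMulShift]
    have hmem3 : x1 * adShift ρ b y1 * vShift ρ b c ∈ Restricted A B := by
      refine mul_mem (mul_mem hx ?_) ?_
      · exact hΓmem b ⟨y1, hy⟩
      · rw [hvu]; exact (u b c).2
    rw [hΨ'mem _ hmem3, hΨ'mem x1 hx, hΨ'mem y1 hy]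
    have key1 : (⟨x1 * adShift ρ b y1 * vShift ρ b c, hmem3⟩ : RP A B)
        = (⟨x1, hx⟩ : RP A B) * Γ b ⟨y1, hy⟩ * u b c := by
      apply Subtype.ext
      show x1 * adShift ρ b y1 * vShift ρ b c
          = (((⟨x1, hx⟩ : RP A B) * Γ b ⟨y1, hy⟩ * u b c : RP A B) : B → A)
      rw [Subgroup.coe_mul, Subgroup.coe_mul, hΓcoe, hvu]
    rw [key1, hΨmul, hΨmul, ← hkey, hu]
    group
  · intro p hp q hq heq
    simp only [Set.mem_setOf_eq] at hp hq
    change Ψ' p.1 * s p.2 = Ψ' q.1 * s q.2 at heq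
    have hp1 : W.eps (Ψ' p.1) = 1 := by rw [hΨ'mem _ hp]; exact hΨker _
    have hq1 : W.eps (Ψ' q.1) = 1 := by rw [hΨ'mem _ hq]; exact hΨker _
    have heps : p.2 = q.2 := by
      have h1 := congrArg W.eps heq
      rwa [map_mul, map_mul, hp1, hq1, one_mul, one_mul, hse, hse] at h1
    have h2 : Ψ' p.1 = Ψ' q.1 := by
      rw [heps] at heq
      exact mul_right_cancel heq
    have h3 : (⟨p.1, hp⟩ : RP A B) = ⟨q.1, hq⟩ :=
      hΨinj (by rw [← hΨ'mem _ hp, ← hΨ'mem _ hq]; exact h2)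
    exact Prod.ext (congrArg Subtype.val h3) heps
  · intro g
    have h1 : W.eps (g * (s (W.eps g))⁻¹) = 1 := by
      rw [map_mul, map_inv, hse]
      group
    obtain ⟨x, hx⟩ := hΨrange _ h1
    refine ⟨((x : B → A), W.eps g), x.2, ?_⟩
    show Ψ' (x : B → A) * s (W.eps g) = g
    rw [hΨ'coe, hx]
    group
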